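/- Let q ∈ ℕ, t ≥ 4 even, and let G be a graph with no induced cycle on at least t vertices. Let X be a set of at least q·t/2 vertices of G such that G[X] is q-colorable, and let Y be an independent set in G disjoint from X. Then there exists Y' ⊆ Y with |Y'| ≥ |Y| / |X|^{qt/2} such that all vertices of Y' have exactly the same set of neighbors inside X. -/

import Mathlib

/-- `G` contains an induced copy of `H`. -/
def HasInducedCopy {W V : Type*} (H : SimpleGraph W) (G : SimpleGraph V) : Prop :=
  ∃ f : W ↪ V, ∀ a b : W, G.Adj (f a) (f b) ↔ H.Adj a b

/-- `G` is `C_{≥t}`-free: it has no induced cycle with at least `t` vertices. -/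
def CgeFree {V : Type*} (t : ℕ) (G : SimpleGraph V) : Prop :=
  ∀ n : ℕ, t ≤ n → ¬ HasInducedCopy (SimpleGraph.cycleGraph n) G

lemma mod2N_eq_one_iff {x N : ℕ} (hN : 2 ≤ N) (hx : x < 2*N) :
    x % N = 1 ↔ (x = 1 ∨ x = N + 1) := by
  rcases Nat.lt_or_ge x N with h | h
  · rw [Nat.mod_eq_of_lt h]; omega
  · rw [Nat.mod_eq_sub_mod h, Nat.mod_eq_of_lt (by omega)]; omega

lemma induced_cycle_absurd {V : Type*} [DecidableEq V] (G : SimpleGraph V)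
    [DecidableRel G.Adj] (t m : ℕ) (hG : CgeFree t G) (hm : 2 ≤ m) (htm : t ≤ 2*m)
    (a y : Fin m → V) (ha : Function.Injective a) (hy : Function.Injective y)
    (hay : ∀ i j, a i ≠ y j)
    (haa : ∀ i j, ¬ G.Adj (a i) (a j)) (hyy : ∀ i j, ¬ G.Adj (y i) (y j))
    (hadj : ∀ i j, G.Adj (y i) (a j) ↔ (j.val = i.val ∨ j.val = (i.val + 1) % m)) :
    False := by
  have hflt : ∀ p : Fin (2*m), p.val / 2 < m := fun p => by have := p.isLt; omega
  set f : Fin (2*m) → V :=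
    fun p => if p.val % 2 = 0 then a ⟨p.val/2, hflt p⟩ else y ⟨p.val/2, hflt p⟩ with hf
  have hfa : ∀ p : Fin (2*m), p.val % 2 = 0 → f p = a ⟨p.val/2, hflt p⟩ := by
    intro p hp; simp only [hf]; rw [if_pos hp]
  have hfy : ∀ p : Fin (2*m), p.val % 2 = 1 → f p = y ⟨p.val/2, hflt p⟩ := by
    intro p hp; simp only [hf]; rw [if_neg (by omega)]
  have finj : Function.Injective f := by
    intro p q hpq
    rcases Nat.mod_two_eq_zero_or_one p.val with hp | hp <;>
      rcases Nat.mod_two_eq_zero_or_one q.val with hq | hq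
    · rw [hfa p hp, hfa q hq] at hpq
      have h2 := ha hpq
      have h3 : p.val / 2 = q.val / 2 := congrArg Fin.val h2
      exact Fin.ext (by omega)
    · rw [hfa p hp, hfy q hq] at hpq
      exact absurd hpq (hay _ _)
    · rw [hfy p hp, hfa q hq] at hpq
      exact absurd hpq.symm (hay _ _)
    · rw [hfy p hp, hfy q hq] at hpq
      have h2 := hy hpq
      have h3 : p.val / 2 = q.val / 2 := congrArg Fin.val h2
      exact Fin.ext (by omega)
  have hpar : ∀ r s : Fin (2*m), r.val % 2 = s.val % 2 → (r - s).val ≠ 1 := by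
    intro r s h
    rw [Fin.sub_def]
    show (2*m - s.val + r.val) % (2*m) ≠ 1
    have h2 : (2*m - s.val + r.val) % (2*m) % 2 = 0 := by
      rw [Nat.mod_mod_of_dvd _ ⟨m, rfl⟩]
      have := r.isLt; have := s.isLt; omega
    omega
  have key : ∀ p q : Fin (2*m), p.val % 2 = 1 → q.val % 2 = 0 →
      (G.Adj (f p) (f q) ↔ ((p - q).val = 1 ∨ (q - p).val = 1)) := by
    intro p q hp hq
    have hpl := p.isLt; have hql := q.isLt
    rw [hfy p hp, hfa q hq, hadj, Fin.sub_def, Fin.sub_def]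
    show (q.val/2 = p.val/2 ∨ q.val/2 = (p.val/2 + 1) % m) ↔
      ((2*m - q.val + p.val) % (2*m) = 1 ∨ (2*m - p.val + q.val) % (2*m) = 1)
    rw [mod2N_eq_one_iff (by omega) (by omega), mod2N_eq_one_iff (by omega) (by omega)]
    rcases Nat.lt_or_ge (p.val/2 + 1) m with hlt | hge
    · rw [Nat.mod_eq_of_lt hlt]; omega
    · have hm' : p.val/2 + 1 = m := by omega
      rw [hm', Nat.mod_self]; omega
  refine hG (2*m) htm ⟨⟨f, finj⟩, ?_⟩
  intro p q
  simp only [Function.Embedding.coeFn_mk]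
  rw [SimpleGraph.cycleGraph_adj']
  rcases Nat.mod_two_eq_zero_or_one p.val with hp | hp <;>
    rcases Nat.mod_two_eq_zero_or_one q.val with hq | hq
  · rw [hfa p hp, hfa q hq]
    refine iff_of_false (haa _ _) ?_
    rintro (h | h)
    · exact hpar p q (by omega) h
    · exact hpar q p (by omega) h
  · rw [G.adj_comm, or_comm]; exact key q p hq hp
  · exact key p q hp hq
  · rw [hfy p hp, hfy q hq]
    refine iff_of_false (hyy _ _) ?_
    rintro (h | h)
    · exact hpar p q (by omega) h
    · exact hpar q p (by omega) h

lemma shatter_absurd {V : Type*} [DecidableEq V] (G : SimpleGraph V)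
    [DecidableRel G.Adj] (t : ℕ) (hG : CgeFree t G) (X Y S A : Finset V)
    (hSX : S ⊆ X) (hAS : A ⊆ S)
    (hYind : ∀ u ∈ Y, ∀ v ∈ Y, ¬ G.Adj u v) (hXY : Disjoint X Y)
    (m : ℕ) (hm : 2 ≤ m) (htm : t ≤ 2*m) (hAcard : A.card = m)
    (hAnonadj : ∀ u ∈ A, ∀ v ∈ A, ¬ G.Adj u v)
    (hS3 : m = 2 → 3 ≤ S.card)
    (hshat : ∀ T ⊆ S, ∃ z ∈ Y, S ∩ X.filter (fun x => G.Adj z x) = T) : False := by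
  have hmpos : 0 < m := by omega
  have hcard : Fintype.card A = m := by rw [Fintype.card_coe]; exact hAcard
  set e := Fintype.equivFinOfCardEq hcard with he
  set a : Fin m → V := fun i => (e.symm i : V) with ha
  have haA : ∀ i, a i ∈ A := fun i => (e.symm i).2
  have ha_inj : Function.Injective a := by
    intro i j h
    exact e.symm.injective (Subtype.coe_injective h)
  set succ : Fin m → Fin m := fun i => ⟨(i.val + 1) % m, Nat.mod_lt _ hmpos⟩ with hsucc
  -- case analysis helper for `% m`
  have hs : ∀ v : ℕ, v < m → ((v+1) % m = v+1 ∧ v+1 < m) ∨ ((v+1) % m = 0 ∧ v+1 = m) := by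
    intro v hv
    rcases Nat.lt_or_ge (v+1) m with h | h
    · exact Or.inl ⟨Nat.mod_eq_of_lt h, h⟩
    · have h2 : v + 1 = m := by omega
      exact Or.inr ⟨by rw [h2, Nat.mod_self], h2⟩
  set T : Fin m → Finset V :=
    fun i => if m = 2 ∧ i.val = 1 then S else {a i, a (succ i)} with hT
  have hTS : ∀ i, T i ⊆ S := by
    intro i
    simp only [hT]
    split
    · exact Finset.Subset.refl S
    · exact Finset.insert_subset (hAS (haA i)) (Finset.singleton_subset_iff.2 (hAS (haA _)))
  choose yy hyY hyT using fun i => hshat (T i) (hTS i)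
  have hmem : ∀ i, ∀ x ∈ S, (G.Adj (yy i) x ↔ x ∈ T i) := by
    intro i x hx
    constructor
    · intro hadj
      rw [← hyT i]
      exact Finset.mem_inter.2 ⟨hx, Finset.mem_filter.2 ⟨hSX hx, hadj⟩⟩
    · intro hxT
      rw [← hyT i] at hxT
      exact (Finset.mem_filter.1 (Finset.mem_inter.1 hxT).2).2
  have hadj : ∀ i j, G.Adj (yy i) (a j) ↔ (j.val = i.val ∨ j.val = (i.val + 1) % m) := by
    intro i j
    rw [hmem i (a j) (hAS (haA j))]
    by_cases hsp : m = 2 ∧ i.val = 1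
    · rw [hT]
      simp only [if_pos hsp]
      refine iff_of_true (hAS (haA j)) ?_
      have := j.isLt
      obtain ⟨hm2, hi1⟩ := hsp
      subst hm2
      rw [hi1]
      omega
    · rw [hT]
      simp only [if_neg hsp, Finset.mem_insert, Finset.mem_singleton,
        ha_inj.eq_iff]
      constructor
      · rintro (rfl | rfl)
        · exact Or.inl rfl
        · exact Or.inr rfl
      · rintro (h | h)
        · exact Or.inl (Fin.ext h)
        · exact Or.inr (Fin.ext h)
  have hy_inj : Function.Injective yy := by
    intro i j h
    have hTij : T i = T j := by rw [← hyT i, ← hyT j, h]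
    by_cases hi : m = 2 ∧ i.val = 1 <;> by_cases hj : m = 2 ∧ j.val = 1
    · exact Fin.ext (by omega)
    · exfalso
      rw [hT] at hTij
      simp only [if_pos hi, if_neg hj] at hTij
      have hc : S.card ≤ 2 := by
        rw [hTij]
        exact (Finset.card_insert_le _ _).trans (by simp)
      have := hS3 hi.1
      omega
    · exfalso
      rw [hT] at hTij
      simp only [if_neg hi, if_pos hj] at hTij
      have hc : S.card ≤ 2 := by
        rw [← hTij]
        exact (Finset.card_insert_le _ _).trans (by simp)
      have := hS3 hj.1
      omega
    · rw [hT] at hTij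
      simp only [if_neg hi, if_neg hj] at hTij
      have h1 : a i = a j ∨ a i = a (succ j) := by
        have := hTij ▸ Finset.mem_insert_self (a i) {a (succ i)}
        simpa using this
      have h2 : a (succ i) = a j ∨ a (succ i) = a (succ j) := by
        have : a (succ i) ∈ ({a j, a (succ j)} : Finset V) := by
          rw [← hTij]; simp
        simpa using this
      rcases h1 with h1 | h1
      · exact ha_inj h1
      · rcases h2 with h2 | h2
        · -- i = succ j and succ i = j
          have e1 : i = succ j := ha_inj h1
          have e2 : succ i = j := ha_inj h2
          have v1 : i.val = (j.val + 1) % m := congrArg Fin.val e1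
          have v2 : (i.val + 1) % m = j.val := congrArg Fin.val e2
          have hi' : m ≠ 2 ∨ i.val ≠ 1 := by tauto
          have hj' : m ≠ 2 ∨ j.val ≠ 1 := by tauto
          exfalso
          rcases hs i.val i.isLt with ⟨hh1, hh2⟩ | ⟨hh1, hh2⟩ <;>
            rcases hs j.val j.isLt with ⟨gg1, gg2⟩ | ⟨gg1, gg2⟩ <;>
            rw [hh1] at v2 <;> rw [gg1] at v1 <;>
            rcases hi' with hi' | hi' <;> rcases hj' with hj' | hj' <;> omega
        · have := ha_inj h2
          have v1 : (i.val + 1) % m = (j.val + 1) % m := congrArg Fin.val this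
          rcases hs i.val i.isLt with ⟨hh1, hh2⟩ | ⟨hh1, hh2⟩ <;>
            rcases hs j.val j.isLt with ⟨gg1, gg2⟩ | ⟨gg1, gg2⟩ <;>
            rw [hh1, gg1] at v1 <;> exact Fin.ext (by omega)
  have hay : ∀ i j, a i ≠ yy j := by
    intro i j hEq
    have : a i ∈ Y := hEq ▸ hyY j
    exact Finset.disjoint_left.mp hXY (hSX (hAS (haA i))) this
  exact induced_cycle_absurd G t m hG hm htm a yy ha_inj hy_inj hay
    (fun i j => hAnonadj _ (haA i) _ (haA j))
    (fun i j => hYind _ (hyY i) _ (hyY j)) hadj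

lemma card_le_of_vc {V : Type*} [DecidableEq V] (𝒜 : Finset (Finset V)) (X : Finset V) (D : ℕ)
    (hsub : ∀ u ∈ 𝒜, u ⊆ X)
    (hvc : ∀ s, 𝒜.Shatters s → s.card ≤ D) :
    𝒜.card ≤ ∑ j ∈ Finset.range (D+1), X.card.choose j := by
  have h1 : 𝒜.shatterer ⊆ (Finset.range (D+1)).biUnion (fun j => X.powersetCard j) := by
    intro s hsmem
    have hsh := Finset.mem_shatterer.1 hsmem
    have hsX : s ⊆ X := by
      obtain ⟨u, hu, hsu⟩ := hsh.exists_superset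
      exact hsu.trans (hsub u hu)
    exact Finset.mem_biUnion.2 ⟨s.card, Finset.mem_range.2 (by have := hvc s hsh; omega),
      (Finset.mem_powersetCard).2 ⟨hsX, rfl⟩⟩
  calc 𝒜.card ≤ 𝒜.shatterer.card := Finset.card_le_card_shatterer 𝒜
    _ ≤ ((Finset.range (D+1)).biUnion fun j => X.powersetCard j).card := Finset.card_le_card h1
    _ ≤ ∑ j ∈ Finset.range (D+1), (X.powersetCard j).card := Finset.card_biUnion_le
    _ = ∑ j ∈ Finset.range (D+1), X.card.choose j := by
        refine Finset.sum_congr rfl fun j _ => ?_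
        rw [Finset.card_powersetCard]

theorem stmt8 {V : Type*} [Fintype V] [DecidableEq V] (G : SimpleGraph V)
    [DecidableRel G.Adj] (t q : ℕ) (hteven : Even t) (ht : 4 ≤ t) (hq : 1 ≤ q)
    (hG : CgeFree t G) (X Y : Finset V)
    (hX : q * t / 2 ≤ X.card)
    (hcol : ∃ c : V → Fin q, ∀ u ∈ X, ∀ v ∈ X, G.Adj u v → c u ≠ c v)
    (hYind : ∀ u ∈ Y, ∀ v ∈ Y, ¬ G.Adj u v)
    (hXY : Disjoint X Y) :
    ∃ Y' ⊆ Y, Y.card ≤ Y'.card * X.card ^ (q * t / 2) ∧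
      ∀ u ∈ Y', ∀ v ∈ Y', ∀ x ∈ X, (G.Adj u x ↔ G.Adj v x) := by
  classical
  obtain ⟨c, hc⟩ := hcol
  obtain ⟨k, hk⟩ := hteven
  have hk2 : 2 ≤ k := by omega
  have he : q * t / 2 = q * k := by
    subst hk
    rw [show q * (k + k) = q * k * 2 by ring, Nat.mul_div_cancel _ (by norm_num)]
  rw [he] at hX ⊢
  rcases Finset.eq_empty_or_nonempty Y with rfl | hYne
  · exact ⟨∅, Finset.Subset.refl _, by simp, by simp⟩
  set tr : V → Finset V := fun z => X.filter (fun x => G.Adj z x) with htr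
  set 𝒜 : Finset (Finset V) := Y.image tr with h𝒜
  have hsub : ∀ u ∈ 𝒜, u ⊆ X := by
    intro u hu
    obtain ⟨z, hz, rfl⟩ := Finset.mem_image.1 hu
    exact Finset.filter_subset _ _
  have hshatW : ∀ s : Finset V, 𝒜.Shatters s → s ⊆ X ∧
      ∀ T ⊆ s, ∃ z ∈ Y, s ∩ X.filter (fun x => G.Adj z x) = T := by
    intro s hs
    constructor
    · obtain ⟨u, hu, hsu⟩ := hs.exists_superset
      exact hsu.trans (hsub u hu)
    · intro T hT
      obtain ⟨u, hu, huT⟩ := hs hT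
      obtain ⟨z, hz, rfl⟩ := Finset.mem_image.1 hu
      exact ⟨z, hz, huT⟩
  have hA𝒜card : 𝒜.card ≤ X.card ^ (q*k) := by
    rcases Nat.lt_or_ge (q*k) 3 with hqk | hqk
    · -- q*k = 2, i.e. q = 1, k = 2
      have h1 : 1*k ≤ q*k := Nat.mul_le_mul_right k hq
      have hqk2 : q*k = 2 := by omega
      have hkk : k = 2 := by omega
      have hq1 : q = 1 := by
        have h2 : q * k = q * 2 := by rw [hkk]
        omega
      have ht4 : t = 4 := by omega
      have hvc : ∀ s, 𝒜.Shatters s → s.card ≤ 2 := by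
        intro s hsh
        by_contra hbig
        obtain ⟨s', hs's, hs'card⟩ := Finset.exists_subset_card_eq (by omega : 3 ≤ s.card)
        have hsh' := hsh.mono_right hs's
        obtain ⟨hs'X, hwit⟩ := hshatW s' hsh'
        refine shatter_absurd G t hG X Y s' s' hs'X (Finset.Subset.refl _) hYind hXY 3
          (by omega) (by omega) hs'card ?_ (by omega) hwit
        intro u hu v hv hadj
        exact hc u (hs'X hu) v (hs'X hv) hadj
          (Fin.ext (by have := (c u).isLt; have := (c v).isLt; omega))
      have hn2 : 2 ≤ X.card := by omega
      rw [hqk2]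
      refine (card_le_of_vc 𝒜 X 2 hsub hvc).trans ?_
      rw [Finset.sum_range_succ, Finset.sum_range_succ, Finset.sum_range_one,
        Nat.choose_zero_right, Nat.choose_one_right, Nat.choose_two_right]
      have heven : 2 ∣ X.card * (X.card - 1) := by
        have h := (Nat.even_mul_succ_self (X.card - 1)).two_dvd
        rw [show X.card - 1 + 1 = X.card by omega, mul_comm] at h
        exact h
      have h2e : X.card * (X.card - 1) / 2 * 2 = X.card * (X.card - 1) :=
        Nat.div_mul_cancel heven
      have hms : X.card * (X.card - 1) + X.card = X.card * X.card := by
        rcases Nat.exists_eq_add_of_le hn2 with ⟨r, hr⟩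
        rw [hr, show 2 + r - 1 = 1 + r by omega]
        ring
      have hP2 : 2 ≤ X.card * (X.card - 1) := by
        calc 2 = 2 * 1 := by norm_num
        _ ≤ X.card * (X.card - 1) := Nat.mul_le_mul hn2 (by omega)
      rw [pow_two]
      omega
    · have hvc : ∀ s, 𝒜.Shatters s → s.card ≤ q*k - 1 := by
        intro s hsh
        by_contra hbig
        obtain ⟨s', hs's, hs'card⟩ := Finset.exists_subset_card_eq (by omega : q*k ≤ s.card)
        have hsh' := hsh.mono_right hs's
        obtain ⟨hs'X, hwit⟩ := hshatW s' hsh'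
        have hfib := Finset.card_eq_sum_card_fiberwise (f := c) (s := s') (t := Finset.univ)
          (fun x _ => Finset.mem_univ _)
        have hex : ∃ i : Fin q, k ≤ (s'.filter (fun x => c x = i)).card := by
          by_contra hno
          push_neg at hno
          have hle : s'.card ≤ ∑ _i : Fin q, (k-1) := by
            rw [hfib]
            exact Finset.sum_le_sum (fun i _ => by have := hno i; omega)
          rw [Finset.sum_const, Finset.card_univ, Fintype.card_fin, smul_eq_mul] at hle
          have hlt : q*(k-1) + q = q*k := by
            rw [← Nat.mul_succ]
            congr 1
            omega
          omega
        obtain ⟨i, hi⟩ := hex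
        obtain ⟨A, hA, hAcard⟩ := Finset.exists_subset_card_eq hi
        have hAs' : A ⊆ s' := hA.trans (Finset.filter_subset _ _)
        refine shatter_absurd G t hG X Y s' A hs'X hAs' hYind hXY k hk2 (by omega) hAcard
          ?_ (fun _ => by omega) hwit
        intro u hu v hv hadj
        have hcu := (Finset.mem_filter.1 (hA hu)).2
        have hcv := (Finset.mem_filter.1 (hA hv)).2
        exact hc u (hs'X (hAs' hu)) v (hs'X (hAs' hv)) hadj (by rw [hcu, hcv])
      have hD1 : q*k - 1 + 1 = q*k := by omega
      refine (card_le_of_vc 𝒜 X (q*k-1) hsub hvc).trans ?_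
      calc ∑ j ∈ Finset.range (q*k-1+1), X.card.choose j
          ≤ ∑ _j ∈ Finset.range (q*k-1+1), X.card ^ (q*k - 1) := by
            refine Finset.sum_le_sum fun j hj => ?_
            refine (Nat.choose_le_pow X.card j).trans ?_
            exact Nat.pow_le_pow_right (by omega) (by have := Finset.mem_range.1 hj; omega)
        _ = (q*k-1+1) * X.card ^ (q*k-1) := by
            rw [Finset.sum_const, Finset.card_range, smul_eq_mul]
        _ = (q*k) * X.card ^ (q*k-1) := by rw [hD1]
        _ ≤ X.card * X.card ^ (q*k-1) := Nat.mul_le_mul_right _ hX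
        _ = X.card ^ (q*k) := by
            rw [← pow_succ', hD1]
  obtain ⟨A₀, hA₀, hmax⟩ := Finset.exists_max_image 𝒜
    (fun A => (Y.filter (fun z => tr z = A)).card) (hYne.image _)
  refine ⟨Y.filter (fun z => tr z = A₀), Finset.filter_subset _ _, ?_, ?_⟩
  · calc Y.card = ∑ A ∈ 𝒜, (Y.filter (fun z => tr z = A)).card :=
        Finset.card_eq_sum_card_fiberwise (fun z hz => Finset.mem_image_of_mem _ hz)
      _ ≤ ∑ _A ∈ 𝒜, (Y.filter (fun z => tr z = A₀)).card := Finset.sum_le_sum hmax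
      _ = 𝒜.card * (Y.filter (fun z => tr z = A₀)).card := by
          rw [Finset.sum_const, smul_eq_mul]
      _ ≤ X.card ^ (q*k) * (Y.filter (fun z => tr z = A₀)).card :=
          Nat.mul_le_mul_right _ hA𝒜card
      _ = (Y.filter (fun z => tr z = A₀)).card * X.card ^ (q*k) := mul_comm _ _
  · intro u hu v hv x hx
    have hu2 := (Finset.mem_filter.1 hu).2
    have hv2 := (Finset.mem_filter.1 hv).2
    have hmm : x ∈ tr u ↔ x ∈ tr v := by rw [hu2, hv2]
    simpa [htr, Finset.mem_filter, hx] using hmm
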